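/- Let Λ be a compact invariant set of a C¹ vector field with a continuous invariant 2-dimensional subbundle F ⊂ T_Λ M, and let φ(x) = log|Det(Φ_T|_{F(x)})| for some fixed T > 0. If for every x ∈ Λ there exists n(x) ∈ ℕ with (1/n(x)) Σ_{i=0}^{n(x)−1} φ(φ_{iT}(x)) > 0, then F is sectionally (area) expanding along the time-T map: there exist C > 0 and λ > 0 such that |Det(Φ_{nT}|_{F(x)})| ≥ C e^{λ nT} for all x ∈ Λ and n ∈ ℕ. -/

import Mathlib

open Set Metric Filter Module

/-- A continuous flow on a metric space. -/
def IsFlow {M : Type*} [MetricSpace M] (φ : ℝ → M → M) : Prop :=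
  Continuous (fun p : ℝ × M => φ p.1 p.2) ∧ (∀ x, φ 0 x = x) ∧
    ∀ s t x, φ (s + t) x = φ s (φ t x)

variable {M : Type*} [MetricSpace M]
variable {V : Type*} [NormedAddCommGroup V] [NormedSpace ℝ V]

/-- A linear cocycle over the flow `φ`, modelling the tangent flow `Φ_t`. -/
def IsCocycleOver (φ : ℝ → M → M) (A : ℝ → M → V →L[ℝ] V) : Prop :=
  (∀ x, A 0 x = ContinuousLinearMap.id ℝ V) ∧
    ∀ s t x, A (s + t) x = (A s (φ t x)).comp (A t x)

/-- Invariance of a subbundle `E` under the cocycle `A` over points of `Λ`. -/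
def InvariantBundle (φ : ℝ → M → M) (A : ℝ → M → V →L[ℝ] V) (Λ : Set M)
    (E : M → Submodule ℝ V) : Prop :=
  ∀ x ∈ Λ, ∀ t : ℝ, ∀ v ∈ E x, A t x v ∈ E (φ t x)

/-- A dominated splitting `E ⊕ F` over `Λ` for the cocycle `A` over the flow `φ`:
the bundles are complementary, invariant, and satisfy
`‖Φ_t|_{E(x)}‖ · ‖Φ_{−t}|_{F(φ_t(x))}‖ ≤ C e^{−λ t}` (in ratio form). -/
def DominatedOn (φ : ℝ → M → M) (A : ℝ → M → V →L[ℝ] V) (Λ : Set M)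
    (E F : M → Submodule ℝ V) : Prop :=
  (∀ x ∈ Λ, E x ⊓ F x = ⊥ ∧ E x ⊔ F x = ⊤) ∧
    InvariantBundle φ A Λ E ∧ InvariantBundle φ A Λ F ∧
    ∃ C > 0, ∃ lam > 0, ∀ x ∈ Λ, ∀ t > 0, ∀ u ∈ E x, ∀ v ∈ F x,
      ‖A t x u‖ * ‖v‖ ≤ C * Real.exp (-lam * t) * (‖u‖ * ‖A t x v‖)

/-- The area of the parallelogram spanned by two vectors of a real inner product space. -/
noncomputable def area {W : Type*} [NormedAddCommGroup W] [InnerProductSpace ℝ W]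
    (u v : W) : ℝ :=
  Real.sqrt (‖u‖ ^ 2 * ‖v‖ ^ 2 - (inner ℝ u v : ℝ) ^ 2)

/-- Uniformization: if along the time-`T` map every point of the compact invariant set `Λ`
has some positive Birkhoff sum of `φ(x) = log |Det(Φ_T|_{F(x)})|`, then `F` is sectionally
(area) expanding along the time-`T` map: `|Det(Φ_{nT}|_{F(x)})| ≥ C e^{λ n T}`. -/
theorem sectional_expansion_of_positive_birkhoff_sums
    {W : Type*} [NormedAddCommGroup W] [InnerProductSpace ℝ W] [FiniteDimensional ℝ W]
    (φ : ℝ → M → M) (hφ : IsFlow φ) (A : ℝ → M → W →L[ℝ] W)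
    (hA : IsCocycleOver φ A) (hAc : Continuous fun p : ℝ × M => A p.1 p.2)
    (Λ : Set M) (hΛc : IsCompact Λ) (hΛi : ∀ t : ℝ, φ t '' Λ = Λ)
    (F : M → Submodule ℝ W) (hFinv : InvariantBundle φ A Λ F)
    (hF2 : ∀ x ∈ Λ, finrank ℝ (F x) = 2)
    (T : ℝ) (hT : 0 < T)
    (D : ℝ → M → ℝ) (hDpos : ∀ (t : ℝ), ∀ x ∈ Λ, 0 < D t x)
    (hDcoc : ∀ (s t : ℝ), ∀ x ∈ Λ, D (s + t) x = D s (φ t x) * D t x)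
    (hDet : ∀ (t : ℝ), ∀ x ∈ Λ, ∀ u ∈ F x, ∀ v ∈ F x,
      area (A t x u) (A t x v) = D t x * area u v)
    (hDcont : ContinuousOn (fun x => D T x) Λ)
    (hpt : ∀ x ∈ Λ, ∃ n : ℕ, 1 ≤ n ∧
      0 < ∑ i ∈ Finset.range n, Real.log (D T (φ (i * T) x))) :
    ∃ C > (0 : ℝ), ∃ lam > (0 : ℝ), ∀ x ∈ Λ, ∀ n : ℕ,
      C * Real.exp (lam * n * T) ≤ D (n * T) x := by
  classical
  -- Handle the empty case
  rcases Λ.eq_empty_or_nonempty with hΛe | hΛne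
  · exact ⟨1, one_pos, 1, one_pos, by simp [hΛe]⟩
  -- Basic flow facts
  have hφ0 : ∀ x : M, φ 0 x = x := hφ.2.1
  have hφadd : ∀ s t x, φ (s + t) x = φ s (φ t x) := hφ.2.2
  have hφct : ∀ t : ℝ, Continuous (φ t) := by
    intro t
    exact hφ.1.comp (continuous_const.prodMk continuous_id)
  have hΛmem : ∀ t : ℝ, ∀ x ∈ Λ, φ t x ∈ Λ := by
    intro t x hx
    rw [← hΛi t]
    exact Set.mem_image_of_mem _ hx
  -- Birkhoff sums
  set B : ℕ → M → ℝ := fun n x => ∑ i ∈ Finset.range n, Real.log (D T (φ (i * T) x)) with hB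
  have hD0 : ∀ x ∈ Λ, D 0 x = 1 := by
    intro x hx
    have h := hDcoc 0 0 x hx
    rw [hφ0 x, add_zero] at h
    have hp := hDpos 0 x hx
    nlinarith
  -- B n x = log (D (n*T) x)
  have hBL : ∀ x ∈ Λ, ∀ n : ℕ, B n x = Real.log (D ((n : ℝ) * T) x) := by
    intro x hx n
    induction n with
    | zero => simp [hB, hD0 x hx]
    | succ n ih =>
      have hcast : ((n + 1 : ℕ) : ℝ) * T = T + (n : ℝ) * T := by push_cast; ring
      have hco := hDcoc T ((n : ℝ) * T) x hx
      have h1 : (0 : ℝ) < D T (φ ((n : ℝ) * T) x) := hDpos T _ (hΛmem _ x hx)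
      have h2 : (0 : ℝ) < D ((n : ℝ) * T) x := hDpos _ x hx
      simp only [hB] at ih ⊢
      rw [Finset.sum_range_succ, hcast, hco, Real.log_mul h1.ne' h2.ne']
      rw [ih]; ring
  -- additivity of Birkhoff sums
  have hBadd : ∀ x ∈ Λ, ∀ n k : ℕ, B (n + k) x = B n (φ ((k : ℝ) * T) x) + B k x := by
    intro x hx n k
    have hy : φ ((k : ℝ) * T) x ∈ Λ := hΛmem _ x hx
    have hcast : ((n + k : ℕ) : ℝ) * T = (n : ℝ) * T + (k : ℝ) * T := by push_cast; ring
    have hco := hDcoc ((n : ℝ) * T) ((k : ℝ) * T) x hx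
    have h1 : (0 : ℝ) < D ((n : ℝ) * T) (φ ((k : ℝ) * T) x) := hDpos _ _ hy
    have h2 : (0 : ℝ) < D ((k : ℝ) * T) x := hDpos _ x hx
    rw [hBL x hx, hBL _ hy, hBL x hx, hcast, hco, Real.log_mul h1.ne' h2.ne']
  -- continuity of Birkhoff sums on Λ
  have hgc : ContinuousOn (fun x => Real.log (D T x)) Λ :=
    ContinuousOn.log hDcont (fun x hx => (hDpos T x hx).ne')
  have hBc : ∀ n : ℕ, ContinuousOn (B n) Λ := by
    intro n
    apply continuousOn_finset_sum
    intro i _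
    exact hgc.comp ((hφct ((i : ℝ) * T)).continuousOn)
      (fun x hx => hΛmem _ x hx)
  -- work in the compact subtype
  haveI : CompactSpace Λ := isCompact_iff_compactSpace.mp hΛc
  -- choose for each point a good time
  have hch : ∀ z : Λ, ∃ n : ℕ, 1 ≤ n ∧ 0 < B n (z : M) := fun z => hpt z.1 z.2
  choose nf hnf1 hnfpos using hch
  -- open cover
  set U : Λ → Set Λ := fun z => {y : Λ | B (nf z) (z : M) / 2 < B (nf z) (y : M)} with hU
  have hUopen : ∀ z : Λ, IsOpen (U z) := by
    intro z
    have : Continuous fun y : Λ => B (nf z) (y : M) := (hBc (nf z)).restrict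
    exact isOpen_Ioi.preimage this
  have hUcov : (Set.univ : Set Λ) ⊆ ⋃ z, U z := by
    intro y _
    exact Set.mem_iUnion.mpr ⟨y, half_lt_self (hnfpos y)⟩
  obtain ⟨t, ht⟩ := isCompact_univ.elim_finite_subcover U hUopen hUcov
  have htne : t.Nonempty := by
    obtain ⟨x0, hx0⟩ := hΛne
    have := ht (Set.mem_univ (⟨x0, hx0⟩ : Λ))
    rcases Set.mem_iUnion₂.mp this with ⟨z, hz, _⟩
    exact ⟨z, hz⟩
  set N : ℕ := t.sup nf with hN
  have hN1 : 1 ≤ N := by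
    obtain ⟨z, hz⟩ := htne
    exact le_trans (hnf1 z) (Finset.le_sup hz)
  set ε : ℝ := t.inf' htne (fun z => B (nf z) (z : M) / 2) with hε
  have hεpos : 0 < ε := by
    rw [hε, Finset.lt_inf'_iff]
    intro z _
    exact half_pos (hnfpos z)
  -- uniform positivity: every point has a good time ≤ N with sum ≥ ε
  have hunif : ∀ x ∈ Λ, ∃ n : ℕ, 1 ≤ n ∧ n ≤ N ∧ ε ≤ B n x := by
    intro x hx
    have := ht (Set.mem_univ (⟨x, hx⟩ : Λ))
    rcases Set.mem_iUnion₂.mp this with ⟨z, hz, hmem⟩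
    refine ⟨nf z, hnf1 z, Finset.le_sup hz, ?_⟩
    have h1 : ε ≤ B (nf z) (z : M) / 2 := Finset.inf'_le _ hz
    exact h1.trans (le_of_lt hmem)
  -- bound on the observable
  obtain ⟨Gb, hGb⟩ := hΛc.exists_bound_of_continuousOn hgc
  set G : ℝ := max Gb 0 with hG
  have hG0 : 0 ≤ G := le_max_right _ _
  have hglb : ∀ y ∈ Λ, -G ≤ Real.log (D T y) := by
    intro y hy
    have := hGb y hy
    rw [Real.norm_eq_abs] at this
    have h1 : |Real.log (D T y)| ≤ G := le_trans this (le_max_left Gb 0)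
    linarith [(abs_le.mp h1).1]
  have hBlb : ∀ m : ℕ, ∀ x ∈ Λ, -((m : ℝ) * G) ≤ B m x := by
    intro m x hx
    have : ∑ i ∈ Finset.range m, (-G) ≤ B m x := by
      apply Finset.sum_le_sum
      intro i _
      exact hglb _ (hΛmem _ x hx)
    simpa using this
  -- key inductive estimate
  have hNpos : (0 : ℝ) < (N : ℝ) := by exact_mod_cast hN1
  have key : ∀ m : ℕ, ∀ x ∈ Λ, ε / N * m - (ε + N * G) ≤ B m x := by
    intro m
    induction m using Nat.strong_induction_on with
    | _ m ih =>
      intro x hx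
      by_cases hm : m ≤ N
      · have h1 : ε / N * m ≤ ε := by
          have : ε / N * m ≤ ε / N * N := by
            apply mul_le_mul_of_nonneg_left _ (le_of_lt (div_pos hεpos hNpos))
            exact_mod_cast hm
          rwa [div_mul_cancel₀ _ hNpos.ne'] at this
        have h2 : -((m : ℝ) * G) ≤ B m x := hBlb m x hx
        have h3 : (m : ℝ) * G ≤ (N : ℝ) * G := by
          apply mul_le_mul_of_nonneg_right _ hG0
          exact_mod_cast hm
        linarith
      · push_neg at hm
        obtain ⟨n, hn1, hnN, hnε⟩ := hunif x hx
        have hnm : n ≤ m := hnN.trans hm.le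
        have hlt : m - n < m := Nat.sub_lt (lt_of_lt_of_le (Nat.lt_of_lt_of_le Nat.zero_lt_one hn1) hnm) (Nat.lt_of_lt_of_le Nat.zero_lt_one hn1)
        have hy : φ ((n : ℝ) * T) x ∈ Λ := hΛmem _ x hx
        have hsplit : B m x = B (m - n) (φ ((n : ℝ) * T) x) + B n x := by
          have := hBadd x hx (m - n) n
          rwa [Nat.sub_add_cancel hnm] at this
        have hih := ih (m - n) hlt _ hy
        have hcast : ((m - n : ℕ) : ℝ) = (m : ℝ) - (n : ℝ) := by
          exact Nat.cast_sub hnm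
        rw [hcast] at hih
        have hεn : ε / N * n ≤ ε := by
          have : ε / N * n ≤ ε / N * N := by
            apply mul_le_mul_of_nonneg_left _ (le_of_lt (div_pos hεpos hNpos))
            exact_mod_cast hnN
          rwa [div_mul_cancel₀ _ hNpos.ne'] at this
        rw [hsplit]
        nlinarith
  -- conclude
  refine ⟨Real.exp (-(ε + N * G)), Real.exp_pos _, ε / (N * T), by positivity, ?_⟩
  intro x hx m
  have hBm := key m x hx
  have hexp : Real.exp (-(ε + N * G)) * Real.exp (ε / (N * T) * m * T)
      = Real.exp (ε / N * m - (ε + N * G)) := by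
    rw [← Real.exp_add]
    congr 1
    field_simp
    ring
  rw [hexp]
  have : Real.exp (ε / N * m - (ε + N * G)) ≤ Real.exp (B m x) := Real.exp_le_exp.mpr hBm
  rw [hBL x hx m] at this
  rwa [Real.exp_log (hDpos _ x hx)] at this
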